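/- Let n ≥ 1 and let c ∈ ℝⁿ with c_k > 0 for all k. The function z ↦ min_{1≤k≤n} |z_k|^{-2·c_k}, defined on the open unit polydisc 𝔻ⁿ = {z ∈ ℂⁿ : |z_k| < 1 for all k} (at the almost-every point of 𝔻ⁿ where all coordinates z_k ≠ 0; on the null set where some z_k = 0 the value may be assigned arbitrarily), is Lebesgue-integrable on 𝔻ⁿ with respect to the volume measure on ℂⁿ ≅ ℝ^{2n} if and only if Σ_{k=1}^n 1/c_k > 1. -/

import Mathlib

open MeasureTheory Set
open scoped ENNReal NNReal

private lemma lt_iInf_iff_fin' {n : ℕ} [Nonempty (Fin n)] {g : Fin n → ℝ} {a : ℝ} :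
    a < ⨅ i, g i ↔ ∀ i, a < g i := by
  constructor
  · intro h i
    exact h.trans_le (ciInf_le (Set.Finite.bddBelow (Set.finite_range g)) i)
  · intro h
    obtain ⟨i, hi⟩ := Finite.exists_min g
    exact (h i).trans_le (le_ciInf hi)

private lemma coord_iff' {t x C : ℝ} (ht : 0 < t) (hC : 0 < C) (hx : 0 ≤ x) :
    (t < x ^ (-(2 * C)) ∧ x < 1) ↔ (x < min 1 (t ^ (-(2 * C))⁻¹) ∧ x ≠ 0) := by
  have hz : -(2 * C) < 0 := by linarith
  rcases eq_or_lt_of_le hx with h0 | h0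
  · simp [← h0, Real.zero_rpow hz.ne, ht.not_gt, not_lt_of_ge ht.le]
  · have key : t < x ^ (-(2 * C)) ↔ x < t ^ (-(2 * C))⁻¹ :=
      (Real.lt_rpow_inv_iff_of_neg h0 ht hz).symm
    rw [lt_min_iff]
    constructor
    · rintro ⟨h1, h2⟩
      exact ⟨⟨h2, key.mp h1⟩, h0.ne'⟩
    · rintro ⟨⟨h2, h1⟩, -⟩
      exact ⟨key.mpr h1, h2⟩

theorem integrableOn_min_rpow_iff (n : ℕ) (hn : 1 ≤ n) (c : Fin n → ℝ)
    (hc : ∀ k, 0 < c k) :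
    IntegrableOn (fun z : Fin n → ℂ => ⨅ k, ‖z k‖ ^ (-(2 * c k)))
        {z : Fin n → ℂ | ∀ k, ‖z k‖ < 1} volume ↔
      1 < ∑ k, (c k)⁻¹ := by
  have hn' : Nonempty (Fin n) := Fin.pos_iff_nonempty.mp hn
  set S : ℝ := ∑ k, (c k)⁻¹ with hS
  set f : (Fin n → ℂ) → ℝ := fun z => ⨅ k, ‖z k‖ ^ (-(2 * c k)) with hf
  set D : Set (Fin n → ℂ) := {z | ∀ k, ‖z k‖ < 1} with hD
  have hfm : Measurable f := by
    apply Measurable.iInf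
    intro k
    have h1 : Measurable fun z : Fin n → ℂ => ‖z k‖ :=
      continuous_norm.measurable.comp (measurable_pi_apply k)
    have h2 : Measurable fun x : ℝ => x ^ (-(2 * c k)) := measurable_id.pow_const _
    exact h2.comp h1
  have hfnn : ∀ z, 0 ≤ f z := fun z =>
    Real.iInf_nonneg fun k => Real.rpow_nonneg (norm_nonneg _) _
  -- layer cake
  have key : ∫⁻ z, ENNReal.ofReal (f z) ∂(volume.restrict D)
      = ∫⁻ t in Ioi (0 : ℝ), (volume.restrict D) {z | t < f z} :=
    lintegral_eq_lintegral_meas_lt _ (Filter.Eventually.of_forall hfnn) hfm.aemeasurable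
  -- measure of superlevel sets
  set g : ℝ → ℝ≥0∞ := fun t =>
    ∏ k, (ENNReal.ofReal (min 1 (t ^ (-(2 * c k))⁻¹)) ^ 2 * (NNReal.pi : ℝ≥0∞)) with hg
  have meas_eq : ∀ t ∈ Ioi (0 : ℝ), (volume.restrict D) {z | t < f z} = g t := by
    intro t ht
    rw [mem_Ioi] at ht
    have hms : MeasurableSet {z : Fin n → ℂ | t < f z} :=
      measurableSet_lt measurable_const hfm
    rw [Measure.restrict_apply hms]
    have hset : {z : Fin n → ℂ | t < f z} ∩ D
        = Set.pi univ (fun k => Metric.ball (0 : ℂ) (min 1 (t ^ (-(2 * c k))⁻¹)) \ {0}) := by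
      ext z
      simp only [mem_inter_iff, mem_setOf_eq, hD, hf, Set.mem_pi, mem_univ, forall_true_left,
        mem_diff, Metric.mem_ball, Complex.dist_eq, sub_zero, mem_singleton_iff]
      rw [lt_iInf_iff_fin']
      constructor
      · rintro ⟨h1, h2⟩ k
        have h := (coord_iff' ht (hc k) (norm_nonneg (z k))).mp ⟨h1 k, h2 k⟩
        exact ⟨h.1, fun h0 => h.2 (by simp [h0])⟩
      · intro h
        have h' := fun k => (coord_iff' ht (hc k) (norm_nonneg (z k))).mpr
          ⟨(h k).1, fun h0 => (h k).2 (norm_eq_zero.mp h0)⟩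
        exact ⟨fun k => (h' k).1, fun k => (h' k).2⟩
    rw [hset, volume_pi_pi]
    refine Finset.prod_congr rfl fun k _ => ?_
    rw [measure_diff_null (measure_singleton 0), Complex.volume_ball]
  have hInt : ∫⁻ t in Ioi (0 : ℝ), (volume.restrict D) {z | t < f z}
      = ∫⁻ t in Ioi (0 : ℝ), g t :=
    setLIntegral_congr_fun measurableSet_Ioi meas_eq
  -- split the t-integral
  have hsplit : ∫⁻ t in Ioi (0 : ℝ), g t
      = (∫⁻ t in Ioc (0 : ℝ) 1, g t) + ∫⁻ t in Ioi (1 : ℝ), g t := by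
    rw [← Ioc_union_Ioi_eq_Ioi (zero_le_one (α := ℝ)),
      lintegral_union measurableSet_Ioi (Ioc_disjoint_Ioi le_rfl)]
  -- value on Ioc 0 1
  have hπ : ((NNReal.pi : ℝ≥0∞)) ≠ ⊤ := ENNReal.coe_ne_top
  have hπ0 : ((NNReal.pi : ℝ≥0∞)) ≠ 0 := by
    simp [NNReal.pi_ne_zero]
  have hg1 : ∀ t ∈ Ioc (0 : ℝ) 1, g t = (NNReal.pi : ℝ≥0∞) ^ n := by
    intro t ht
    have : ∀ k : Fin n, min 1 (t ^ (-(2 * c k))⁻¹) = 1 := by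
      intro k
      have h1 : (1 : ℝ) ≤ t ^ (-(2 * c k))⁻¹ := by
        apply Real.one_le_rpow_of_pos_of_le_one_of_nonpos ht.1 ht.2
        rw [inv_nonpos]
        nlinarith [hc k]
      exact min_eq_left h1
    simp only [hg, this]
    simp [Finset.prod_const, Finset.card_univ]
  have hIoc : ∫⁻ t in Ioc (0 : ℝ) 1, g t = (NNReal.pi : ℝ≥0∞) ^ n := by
    rw [setLIntegral_congr_fun measurableSet_Ioc hg1,
      lintegral_const, Measure.restrict_apply_univ, Real.volume_Ioc]
    simp
  -- value on Ioi 1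
  have hg2 : ∀ t ∈ Ioi (1 : ℝ), g t = (NNReal.pi : ℝ≥0∞) ^ n * ENNReal.ofReal (t ^ (-S)) := by
    intro t ht
    rw [mem_Ioi] at ht
    have htpos : (0 : ℝ) < t := lt_trans zero_lt_one ht
    have hmin : ∀ k : Fin n, min 1 (t ^ (-(2 * c k))⁻¹) = t ^ (-(2 * c k))⁻¹ := by
      intro k
      apply min_eq_right
      apply Real.rpow_le_one_of_one_le_of_nonpos ht.le
      rw [inv_nonpos]
      nlinarith [hc k]
    have hsq : ∀ k : Fin n, (t ^ (-(2 * c k))⁻¹) ^ 2 = t ^ (-(c k)⁻¹) := by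
      intro k
      rw [← Real.rpow_natCast (t ^ (-(2 * c k))⁻¹) 2, ← Real.rpow_mul htpos.le]
      congr 1
      have := (hc k).ne'
      field_simp
      norm_num
    calc g t = ∏ k, (ENNReal.ofReal ((t ^ (-(2 * c k))⁻¹) ^ 2) * (NNReal.pi : ℝ≥0∞)) := by
          refine Finset.prod_congr rfl fun k _ => ?_
          rw [hmin k, ENNReal.ofReal_pow (Real.rpow_nonneg htpos.le _)]
      _ = (∏ k, ENNReal.ofReal (t ^ (-(c k)⁻¹))) * (NNReal.pi : ℝ≥0∞) ^ n := by
          rw [Finset.prod_mul_distrib, Finset.prod_const, Finset.card_univ, Fintype.card_fin]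
          congr 1
          exact Finset.prod_congr rfl fun k _ => by rw [hsq k]
      _ = (NNReal.pi : ℝ≥0∞) ^ n * ENNReal.ofReal (t ^ (-S)) := by
          rw [← ENNReal.ofReal_prod_of_nonneg
            (fun k _ => Real.rpow_nonneg htpos.le _), mul_comm]
          congr 2
          rw [← Real.rpow_sum_of_pos htpos]
          congr 1
          simp [hS]
  have hIoi : ∫⁻ t in Ioi (1 : ℝ), g t
      = (NNReal.pi : ℝ≥0∞) ^ n * ∫⁻ t in Ioi (1 : ℝ), ENNReal.ofReal (t ^ (-S)) := by
    rw [setLIntegral_congr_fun measurableSet_Ioi hg2]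
    exact lintegral_const_mul _
      (ENNReal.measurable_ofReal.comp (measurable_id.pow_const _))
  -- final finiteness
  have hItail : (∫⁻ t in Ioi (1 : ℝ), ENNReal.ofReal (t ^ (-S)) < ⊤) ↔ 1 < S := by
    have hnn : 0 ≤ᵐ[volume.restrict (Ioi (1 : ℝ))] fun t : ℝ => t ^ (-S) := by
      filter_upwards [ae_restrict_mem measurableSet_Ioi] with t ht
      exact Real.rpow_nonneg (le_trans zero_le_one (le_of_lt ht)) _
    have hm : AEStronglyMeasurable (fun t : ℝ => t ^ (-S)) (volume.restrict (Ioi (1 : ℝ))) := by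
      exact (measurable_id.pow_const _).aestronglyMeasurable
    rw [← hasFiniteIntegral_iff_ofReal hnn]
    constructor
    · intro h
      have := (integrableOn_Ioi_rpow_iff one_pos).mp ⟨hm, h⟩
      linarith
    · intro h
      exact ((integrableOn_Ioi_rpow_iff one_pos).mpr (by linarith)).2
  -- assemble
  have hAESM : AEStronglyMeasurable f (volume.restrict D) := hfm.aestronglyMeasurable
  have hiff : IntegrableOn f D volume
      ↔ ∫⁻ z, ENNReal.ofReal (f z) ∂(volume.restrict D) < ⊤ := by
    rw [IntegrableOn]
    constructor
    · intro h
      exact (hasFiniteIntegral_iff_ofReal (Filter.Eventually.of_forall hfnn)).mp h.2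
    · intro h
      exact ⟨hAESM, (hasFiniteIntegral_iff_ofReal (Filter.Eventually.of_forall hfnn)).mpr h⟩
  rw [hiff, key, hInt, hsplit, hIoc, hIoi]
  have hπn : ((NNReal.pi : ℝ≥0∞)) ^ n ≠ ⊤ := ENNReal.pow_ne_top hπ
  have hπn0 : ((NNReal.pi : ℝ≥0∞)) ^ n ≠ 0 := pow_ne_zero _ hπ0
  rw [ENNReal.add_lt_top]
  rw [← hItail]
  constructor
  · rintro ⟨-, h⟩
    by_contra htop
    rw [not_lt, top_le_iff] at htop
    rw [htop, ENNReal.mul_top hπn0] at h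
    exact (lt_irrefl ⊤) h
  · intro h
    exact ⟨hπn.lt_top, ENNReal.mul_lt_top hπn.lt_top h⟩
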